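/- Let α ∈ (0,1) and let λ be a nonzero complex number with arg(λ) ∈ (-πα, πα). Define J_λ(t) = ∫₀^∞ e^{-u t} u^{α-1} / (u^{2α} - 2λ u^α cos(πα) + λ²) du for t ≥ 0. Then J_λ is well defined (the integral converges for every t ≥ 0), J_λ is continuous on [0, ∞), and J_λ(t) → 0 as t → ∞. -/

import Mathlib

open Real Set Filter MeasureTheory

noncomputable def D11 (α : ℝ) (lam : ℂ) (u : ℝ) : ℂ :=
  ((u ^ (2 * α) : ℝ) : ℂ) - 2 * lam * ((u ^ α : ℝ) : ℂ) * ((Real.cos (π * α) : ℝ) : ℂ) + lam ^ 2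

lemma aux_ne_11 {c r φ : ℝ} (hc : 0 < c) (hr : 0 < r) (hφ0 : φ ≠ 0) (hφ2 : |φ| < 2 * π) :
    (c : ℂ) ≠ (r : ℂ) * Complex.exp ((φ : ℂ) * Complex.I) := by
  intro h
  have habs : ‖(c : ℂ)‖ = ‖(r : ℂ) * Complex.exp ((φ : ℂ) * Complex.I)‖ := by
    rw [h]
  rw [norm_mul, Complex.norm_real, Complex.norm_real, Real.norm_eq_abs, Real.norm_eq_abs, Complex.norm_exp] at habs
  have hre : ((φ : ℂ) * Complex.I).re = 0 := by simp
  rw [hre, Real.exp_zero, mul_one, abs_of_pos hc, abs_of_pos hr] at habs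
  have hexp : Complex.exp ((φ : ℂ) * Complex.I) = 1 := by
    have hr' : (r : ℂ) ≠ 0 := by exact_mod_cast ne_of_gt hr
    have : (r : ℂ) * Complex.exp ((φ : ℂ) * Complex.I) = (r : ℂ) * 1 := by
      rw [mul_one, ← h, habs]
    exact mul_left_cancel₀ hr' this
  obtain ⟨n, hn⟩ := Complex.exp_eq_one_iff.mp hexp
  have hφn : φ = n * (2 * π) := by
    have := congrArg Complex.im hn
    simpa using this
  rcases eq_or_ne n 0 with h0 | h0
  · exact hφ0 (by simp [hφn, h0])
  · have : (1 : ℝ) ≤ |(n : ℝ)| := by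
      have : (1 : ℤ) ≤ |n| := Int.one_le_abs h0
      exact_mod_cast this
    have h2π : (0 : ℝ) < 2 * π := by positivity
    have : 2 * π ≤ |φ| := by
      rw [hφn, abs_mul, abs_of_pos h2π]
      nlinarith
    linarith

theorem stmt_11 (α : ℝ) (hα : α ∈ Set.Ioo (0 : ℝ) 1)
    (lam : ℂ) (hlam : lam ≠ 0) (harg : lam.arg ∈ Set.Ioo (-(π * α)) (π * α)) :
    (∀ t : ℝ, 0 ≤ t → MeasureTheory.IntegrableOn (fun u : ℝ =>
        Complex.exp (-(u * t : ℝ)) * ((u ^ (α - 1) : ℝ) : ℂ) /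
          (((u ^ (2 * α) : ℝ) : ℂ) - 2 * lam * ((u ^ α : ℝ) : ℂ) * (Real.cos (π * α) : ℝ) +
            lam ^ 2))
        (Set.Ioi 0)) ∧
    ContinuousOn (fun t : ℝ => ∫ u in Set.Ioi (0 : ℝ),
        Complex.exp (-(u * t : ℝ)) * ((u ^ (α - 1) : ℝ) : ℂ) /
          (((u ^ (2 * α) : ℝ) : ℂ) - 2 * lam * ((u ^ α : ℝ) : ℂ) * (Real.cos (π * α) : ℝ) +
            lam ^ 2))
      (Set.Ici 0) ∧
    Filter.Tendsto (fun t : ℝ => ∫ u in Set.Ioi (0 : ℝ),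
        Complex.exp (-(u * t : ℝ)) * ((u ^ (α - 1) : ℝ) : ℂ) /
          (((u ^ (2 * α) : ℝ) : ℂ) - 2 * lam * ((u ^ α : ℝ) : ℂ) * (Real.cos (π * α) : ℝ) +
            lam ^ 2))
      Filter.atTop (nhds 0) := by
  obtain ⟨hα0, hα1⟩ := hα
  obtain ⟨harg1, harg2⟩ := harg
  have hπ : (0 : ℝ) < π := Real.pi_pos
  set θ := lam.arg with hθ
  have habs : (0 : ℝ) < ‖lam‖ := norm_pos_iff.mpr hlam
  set M := ‖lam‖ with hM
  -- square identity
  have hsqR : ∀ u : ℝ, 0 ≤ u → u ^ (2 * α) = (u ^ α) ^ 2 := by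
    intro u hu
    rw [mul_comm, Real.rpow_mul hu]
    norm_num
  -- factorization
  have hfac : ∀ u : ℝ, 0 ≤ u → D11 α lam u =
      (((u ^ α : ℝ) : ℂ) - (M : ℂ) * Complex.exp (((θ + π * α : ℝ) : ℂ) * Complex.I)) *
      (((u ^ α : ℝ) : ℂ) - (M : ℂ) * Complex.exp (((θ - π * α : ℝ) : ℂ) * Complex.I)) := by
    intro u hu
    have hx : ((u ^ (2 * α) : ℝ) : ℂ) = ((u ^ α : ℝ) : ℂ) ^ 2 := by
      rw [hsqR u hu]; push_cast; ring
    have hprod : (M : ℂ) * Complex.exp (((θ + π * α : ℝ) : ℂ) * Complex.I) *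
        ((M : ℂ) * Complex.exp (((θ - π * α : ℝ) : ℂ) * Complex.I)) = lam ^ 2 := by
      rw [mul_mul_mul_comm, ← Complex.exp_add]
      have : ((θ + π * α : ℝ) : ℂ) * Complex.I + ((θ - π * α : ℝ) : ℂ) * Complex.I
          = (θ : ℂ) * Complex.I + (θ : ℂ) * Complex.I := by push_cast; ring
      rw [this, Complex.exp_add]
      have hl := Complex.norm_mul_exp_arg_mul_I lam
      rw [← hθ] at hl
      calc (M : ℂ) * (M : ℂ) * (Complex.exp ((θ : ℂ) * Complex.I) * Complex.exp ((θ : ℂ) * Complex.I))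
            = ((M : ℂ) * Complex.exp ((θ : ℂ) * Complex.I)) * ((M : ℂ) * Complex.exp ((θ : ℂ) * Complex.I)) := by ring
        _ = lam * lam := by rw [hl]
        _ = lam ^ 2 := by ring
    have hsum : (M : ℂ) * Complex.exp (((θ + π * α : ℝ) : ℂ) * Complex.I) +
        (M : ℂ) * Complex.exp (((θ - π * α : ℝ) : ℂ) * Complex.I)
        = 2 * lam * ((Real.cos (π * α) : ℝ) : ℂ) := by
      have e1 : ((θ + π * α : ℝ) : ℂ) * Complex.I = (θ : ℂ) * Complex.I
          + ((π * α : ℝ) : ℂ) * Complex.I := by push_cast; ring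
      have e2 : ((θ - π * α : ℝ) : ℂ) * Complex.I = (θ : ℂ) * Complex.I
          + (-((π * α : ℝ) : ℂ)) * Complex.I := by push_cast; ring
      rw [e1, e2, Complex.exp_add, Complex.exp_add]
      have h2c := Complex.two_cos ((π * α : ℝ) : ℂ)
      have hl := Complex.norm_mul_exp_arg_mul_I lam
      rw [← hθ] at hl
      rw [Complex.ofReal_cos]
      calc (M : ℂ) * (Complex.exp ((θ : ℂ) * Complex.I) * Complex.exp (((π * α : ℝ) : ℂ) * Complex.I))
            + (M : ℂ) * (Complex.exp ((θ : ℂ) * Complex.I) * Complex.exp ((-((π * α : ℝ) : ℂ)) * Complex.I))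
          = ((M : ℂ) * Complex.exp ((θ : ℂ) * Complex.I)) *
            (Complex.exp (((π * α : ℝ) : ℂ) * Complex.I) + Complex.exp ((-((π * α : ℝ) : ℂ)) * Complex.I)) := by
            ring
        _ = lam * (2 * Complex.cos ((π * α : ℝ) : ℂ)) := by rw [hl, h2c]
        _ = 2 * lam * Complex.cos ((π * α : ℝ) : ℂ) := by ring
    unfold D11
    rw [hx]
    linear_combination (((u ^ α : ℝ) : ℂ)) * hsum - hprod
  -- nonvanishing on Ici 0
  have hDne : ∀ u : ℝ, 0 < u → D11 α lam u ≠ 0 := by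
    intro u hu
    rw [hfac u hu.le]
    have hφ1 : θ + π * α ≠ 0 := by nlinarith
    have hφ1' : |θ + π * α| < 2 * π := by
      rw [abs_of_pos (by nlinarith)]
      nlinarith
    have hφ2 : θ - π * α ≠ 0 := by nlinarith
    have hφ2' : |θ - π * α| < 2 * π := by
      rw [abs_of_neg (by nlinarith)]
      nlinarith
    exact mul_ne_zero
      (sub_ne_zero.mpr (aux_ne_11 (Real.rpow_pos_of_pos hu α) habs hφ1 hφ1'))
      (sub_ne_zero.mpr (aux_ne_11 (Real.rpow_pos_of_pos hu α) habs hφ2 hφ2'))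
  have hD0 : D11 α lam 0 = lam ^ 2 := by
    unfold D11
    rw [Real.zero_rpow (by positivity : 2 * α ≠ 0), Real.zero_rpow (ne_of_gt hα0)]
    simp
  have hDne' : ∀ u : ℝ, 0 ≤ u → D11 α lam u ≠ 0 := by
    intro u hu
    rcases eq_or_lt_of_le hu with h | h
    · rw [← h, hD0]; exact pow_ne_zero 2 hlam
    · exact hDne u h
  -- continuity of D
  have hrc : ∀ c : ℝ, 0 ≤ c → Continuous (fun x : ℝ => x ^ c) := fun c hc =>
    continuous_iff_continuousAt.2 fun x => Real.continuousAt_rpow_const x c (Or.inr hc)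
  have hDcont : Continuous (D11 α lam) := by
    unfold D11
    exact (((Complex.continuous_ofReal.comp (hrc (2 * α) (by positivity))).sub
      ((continuous_const.mul (Complex.continuous_ofReal.comp (hrc α hα0.le))).mul
        continuous_const)).add continuous_const)
  -- choice of R
  set R := max 1 ((2 * M) ^ α⁻¹) with hR
  have hR1 : (1 : ℝ) ≤ R := le_max_left _ _
  have hR0 : (0 : ℝ) < R := lt_of_lt_of_le one_pos hR1
  have hRpow : ∀ u : ℝ, R ≤ u → 2 * M ≤ u ^ α := by
    intro u hu
    have h1 : ((2 * M) ^ α⁻¹) ^ α ≤ u ^ α :=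
      Real.rpow_le_rpow (by positivity) (le_trans (le_max_right _ _) hu) hα0.le
    calc 2 * M = (2 * M) ^ ((α⁻¹) * α) := by
          rw [inv_mul_cancel₀ (ne_of_gt hα0), Real.rpow_one]
      _ = ((2 * M) ^ α⁻¹) ^ α := Real.rpow_mul (by positivity) _ _
      _ ≤ u ^ α := h1
  -- min of ‖D‖ on [0,R]
  obtain ⟨x₀, hx₀K, hx₀min⟩ := (isCompact_Icc (a := (0:ℝ)) (b := R)).exists_isMinOn
    ⟨0, by constructor <;> [rfl; exact hR0.le]⟩ (hDcont.norm.continuousOn)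
  set c := ‖D11 α lam x₀‖ with hc
  have hc0 : 0 < c := norm_pos_iff.mpr (hDne' x₀ hx₀K.1)
  have hDge : ∀ u ∈ Icc (0:ℝ) R, c ≤ ‖D11 α lam u‖ := fun u hu => hx₀min hu
  -- lower bound at infinity
  have hDbig : ∀ u : ℝ, R ≤ u → u ^ (2 * α) / 4 ≤ ‖D11 α lam u‖ := by
    intro u hu
    have hu0 : (0 : ℝ) < u := lt_of_lt_of_le hR0 hu
    have hua : 0 < u ^ α := Real.rpow_pos_of_pos hu0 α
    have h2M : 2 * M ≤ u ^ α := hRpow u hu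
    rw [hfac u hu0.le, norm_mul]
    have hb1 : u ^ α / 2 ≤ ‖((u ^ α : ℝ) : ℂ) - (M : ℂ) * Complex.exp (((θ + π * α : ℝ) : ℂ) * Complex.I)‖ := by
      have := norm_sub_norm_le ((u ^ α : ℝ) : ℂ)
        ((M : ℂ) * Complex.exp (((θ + π * α : ℝ) : ℂ) * Complex.I))
      have hn1 : ‖((u ^ α : ℝ) : ℂ)‖ = u ^ α := by
        rw [Complex.norm_real, Real.norm_eq_abs, abs_of_pos hua]
      have hn2 : ‖(M : ℂ) * Complex.exp (((θ + π * α : ℝ) : ℂ) * Complex.I)‖ = M := by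
        rw [norm_mul, Complex.norm_real, Real.norm_eq_abs, Complex.norm_exp_ofReal_mul_I,
          abs_of_pos habs, mul_one]
      rw [hn1, hn2] at this
      linarith
    have hb2 : u ^ α / 2 ≤ ‖((u ^ α : ℝ) : ℂ) - (M : ℂ) * Complex.exp (((θ - π * α : ℝ) : ℂ) * Complex.I)‖ := by
      have := norm_sub_norm_le ((u ^ α : ℝ) : ℂ)
        ((M : ℂ) * Complex.exp (((θ - π * α : ℝ) : ℂ) * Complex.I))
      have hn1 : ‖((u ^ α : ℝ) : ℂ)‖ = u ^ α := by
        rw [Complex.norm_real, Real.norm_eq_abs, abs_of_pos hua]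
      have hn2 : ‖(M : ℂ) * Complex.exp (((θ - π * α : ℝ) : ℂ) * Complex.I)‖ = M := by
        rw [norm_mul, Complex.norm_real, Real.norm_eq_abs, Complex.norm_exp_ofReal_mul_I,
          abs_of_pos habs, mul_one]
      rw [hn1, hn2] at this
      linarith
    calc u ^ (2 * α) / 4 = (u ^ α / 2) * (u ^ α / 2) := by
          rw [hsqR u hu0.le]; ring
      _ ≤ _ := mul_le_mul hb1 hb2 (by positivity) (le_trans (by positivity) hb1)
  -- integrability of the majorant g0
  have hg0cont : ContinuousOn (fun u : ℝ => u ^ (α - 1) / ‖D11 α lam u‖) (Ioi 0) := by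
    apply ContinuousOn.div
    · intro u hu
      exact (Real.continuousAt_rpow_const u (α - 1) (Or.inl (ne_of_gt hu))).continuousWithinAt
    · exact hDcont.norm.continuousOn
    · exact fun u hu => ne_of_gt (norm_pos_iff.mpr (hDne u hu))
  have hg0int : IntegrableOn (fun u : ℝ => u ^ (α - 1) / ‖D11 α lam u‖) (Ioi 0) := by
    rw [← Set.Ioc_union_Ioi_eq_Ioi hR0.le]
    apply MeasureTheory.IntegrableOn.union
    · apply Integrable.mono' (g := fun u : ℝ => u ^ (α - 1) / c)
      · have h1 : IntervalIntegrable (fun u : ℝ => u ^ (α - 1) / c) volume 0 R :=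
          (intervalIntegral.intervalIntegrable_rpow' (by linarith)).div_const c
        exact (intervalIntegrable_iff_integrableOn_Ioc_of_le hR0.le).mp h1
      · exact (hg0cont.mono Set.Ioc_subset_Ioi_self).aestronglyMeasurable measurableSet_Ioc
      · rw [ae_restrict_iff' measurableSet_Ioc]
        refine ae_of_all _ fun u hu => ?_
        have hu0 : 0 < u := hu.1
        have hnn : 0 ≤ u ^ (α - 1) / ‖D11 α lam u‖ := by positivity
        rw [Real.norm_eq_abs, abs_of_nonneg hnn]
        exact div_le_div_of_nonneg_left (by positivity) hc0
          (hDge u ⟨hu0.le, hu.2⟩)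
    · apply Integrable.mono' (g := fun u : ℝ => 4 * u ^ (-α - 1))
      · exact (integrableOn_Ioi_rpow_of_lt (by linarith) hR0).const_mul 4
      · exact (hg0cont.mono fun u hu => lt_trans hR0 hu).aestronglyMeasurable measurableSet_Ioi
      · rw [ae_restrict_iff' measurableSet_Ioi]
        refine ae_of_all _ fun u hu => ?_
        have hu0 : 0 < u := lt_trans hR0 hu
        have hnn : 0 ≤ u ^ (α - 1) / ‖D11 α lam u‖ := by positivity
        rw [Real.norm_eq_abs, abs_of_nonneg hnn]
        have h2 : u ^ (α - 1) / ‖D11 α lam u‖ ≤ u ^ (α - 1) / (u ^ (2 * α) / 4) :=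
          div_le_div_of_nonneg_left (by positivity) (by positivity) (hDbig u hu.le)
        have h4 : u ^ (α - 1) / u ^ (2 * α) = u ^ (-α - 1) := by
          rw [← Real.rpow_sub hu0]
          ring_nf
        have h3 : u ^ (α - 1) / (u ^ (2 * α) / 4) = 4 * u ^ (-α - 1) := by
          rw [div_div_eq_mul_div, mul_comm (u ^ (α - 1)) 4, mul_div_assoc, h4]
        linarith
  -- norm bound on the integrand
  have hFnorm : ∀ t : ℝ, 0 ≤ t → ∀ u ∈ Ioi (0 : ℝ),
      ‖Complex.exp (-(u * t : ℝ)) * ((u ^ (α - 1) : ℝ) : ℂ) / D11 α lam u‖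
        ≤ u ^ (α - 1) / ‖D11 α lam u‖ := by
    intro t ht u hu
    have hu0 : (0 : ℝ) < u := hu
    have hnum : 0 ≤ u ^ (α - 1) := (Real.rpow_pos_of_pos hu0 _).le
    rw [norm_div, norm_mul]
    have h2 : ‖((u ^ (α - 1) : ℝ) : ℂ)‖ = u ^ (α - 1) := by
      rw [Complex.norm_real, Real.norm_eq_abs, abs_of_nonneg hnum]
    have h1 : ‖Complex.exp (-((u * t : ℝ) : ℂ))‖ ≤ 1 := by
      rw [Complex.norm_exp]
      refine Real.exp_le_one_iff.mpr ?_
      simp only [Complex.neg_re, Complex.ofReal_re]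
      nlinarith
    rw [h2]
    calc ‖Complex.exp (-((u * t : ℝ) : ℂ))‖ * u ^ (α - 1) / ‖D11 α lam u‖
        ≤ 1 * u ^ (α - 1) / ‖D11 α lam u‖ := by gcongr
      _ = u ^ (α - 1) / ‖D11 α lam u‖ := by rw [one_mul]
  -- measurability
  have hFmeas : ∀ t : ℝ, AEStronglyMeasurable
      (fun u : ℝ => Complex.exp (-(u * t : ℝ)) * ((u ^ (α - 1) : ℝ) : ℂ) / D11 α lam u)
      (volume.restrict (Ioi 0)) := by
    intro t
    apply ContinuousOn.aestronglyMeasurable _ measurableSet_Ioi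
    apply ContinuousOn.div
    · apply ContinuousOn.mul
      · exact Continuous.continuousOn (by fun_prop)
      · intro u hu
        exact (Complex.continuous_ofReal.continuousAt.comp
          (Real.continuousAt_rpow_const u (α - 1) (Or.inl (ne_of_gt hu)))).continuousWithinAt
    · exact hDcont.continuousOn
    · exact fun u hu => hDne u hu
  -- integrability of F t
  have hFint : ∀ t : ℝ, 0 ≤ t → IntegrableOn
      (fun u : ℝ => Complex.exp (-(u * t : ℝ)) * ((u ^ (α - 1) : ℝ) : ℂ) / D11 α lam u)
      (Ioi 0) := by
    intro t ht
    exact Integrable.mono' hg0int (hFmeas t)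
      ((ae_restrict_iff' measurableSet_Ioi).2 (ae_of_all _ fun u hu => hFnorm t ht u hu))
  refine ⟨fun t ht => hFint t ht, ?_, ?_⟩
  · -- continuity
    intro t₀ ht₀
    apply MeasureTheory.continuousWithinAt_of_dominated
      (bound := fun u : ℝ => u ^ (α - 1) / ‖D11 α lam u‖)
    · exact Eventually.of_forall hFmeas
    · filter_upwards [self_mem_nhdsWithin] with t ht
      exact (ae_restrict_iff' measurableSet_Ioi).2 (ae_of_all _ fun u hu => hFnorm t ht u hu)
    · exact hg0int
    · refine (ae_restrict_iff' measurableSet_Ioi).2 (ae_of_all _ fun u hu => ?_)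
      refine Continuous.continuousWithinAt (Continuous.div_const (Continuous.mul ?_ continuous_const) _)
      fun_prop
  · -- tendsto 0
    have h0 : (0 : ℂ) = ∫ _ in Ioi (0 : ℝ), (0 : ℂ) := by simp
    rw [h0]
    apply MeasureTheory.tendsto_integral_filter_of_dominated_convergence
      (fun u : ℝ => u ^ (α - 1) / ‖D11 α lam u‖)
    · exact Eventually.of_forall hFmeas
    · filter_upwards [eventually_ge_atTop (0 : ℝ)] with t ht
      exact (ae_restrict_iff' measurableSet_Ioi).2 (ae_of_all _ fun u hu => hFnorm t ht u hu)
    · exact hg0int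
    · refine (ae_restrict_iff' measurableSet_Ioi).2 (ae_of_all _ fun u hu => ?_)
      have hu0 : (0 : ℝ) < u := hu
      have h1 : Tendsto (fun t : ℝ => Real.exp (-(u * t))) atTop (nhds 0) := by
        apply Real.tendsto_exp_atBot.comp
        exact Filter.tendsto_neg_atTop_atBot.comp (tendsto_id.const_mul_atTop hu0)
      apply squeeze_zero_norm
        (a := fun t : ℝ => Real.exp (-(u * t)) * (u ^ (α - 1) / ‖D11 α lam u‖))
      · intro t
        rw [norm_div, norm_mul]
        have e1 : ‖Complex.exp (-((u * t : ℝ) : ℂ))‖ = Real.exp (-(u * t)) := by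
          rw [Complex.norm_exp]
          simp
        have e2 : ‖((u ^ (α - 1) : ℝ) : ℂ)‖ = u ^ (α - 1) := by
          rw [Complex.norm_real, Real.norm_eq_abs,
            abs_of_nonneg (Real.rpow_pos_of_pos hu0 _).le]
        rw [e1, e2, mul_div_assoc]
        exact le_rfl
      · simpa using h1.mul_const (u ^ (α - 1) / ‖D11 α lam u‖)
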